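/- Let A ⊆ ℕ be any set and define x = Σ_{a∈A} 2^{-(a+1)}. If the left Dedekind cut {q ∈ ℚ : q < x} is a computable set of rationals, then A is a computable set. -/

import Mathlib

open Encodable Denumerable

namespace S12

/-! ### Primrec gcd -/

def gstep (p : ℕ × ℕ) : ℕ × ℕ := if p.1 = 0 then p else (p.2 % p.1, p.1)

lemma gstep_zero (n : ℕ) : ∀ j, gstep^[j] (0, n) = (0, n) := by
  intro j; induction j with
  | zero => rfl
  | succ j ih => rw [Function.iterate_succ_apply, show gstep (0,n) = (0,n) from if_pos rfl, ih]

lemma gcd_iter : ∀ k, ∀ m n : ℕ, m ≤ k → (gstep^[k+1] (m,n)).2 = Nat.gcd m n := by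
  intro k; induction k with
  | zero => intro m n hm; interval_cases m; rw [gstep_zero]; simp
  | succ k ih =>
    intro m n hm
    rcases Nat.eq_zero_or_pos m with rfl | hpos
    · rw [gstep_zero]; simp
    · have h1 : gstep (m, n) = (n % m, m) := if_neg (by omega)
      rw [Function.iterate_succ_apply, h1, ih _ _ (by have := Nat.mod_lt n hpos; omega)]
      exact (Nat.gcd_rec m n).symm

lemma primrec_gstep : Primrec gstep := by
  unfold gstep
  exact Primrec.ite (Primrec.eq.comp Primrec.fst (Primrec.const 0)) Primrec.id
    (Primrec.pair (Primrec.nat_mod.comp Primrec.snd Primrec.fst) Primrec.fst)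

lemma primrec_gcd : Primrec₂ Nat.gcd := by
  have h : Primrec (fun p : ℕ × ℕ => (gstep^[p.1 + 1] p).2) := by
    have := Primrec.nat_iterate (h := fun (_ : ℕ × ℕ) (q : ℕ × ℕ) => gstep q)
      (Primrec.succ.comp Primrec.fst) Primrec.id (primrec_gstep.comp Primrec.snd).to₂
    exact Primrec.snd.comp this
  exact (h.of_eq (fun p => gcd_iter _ _ _ (le_refl _))).to₂

lemma primrec_pow2 : Primrec (fun n : ℕ => 2^n) := by
  have h : Primrec (fun n : ℕ => (fun x => 2*x)^[n] 1) :=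
    Primrec.nat_iterate Primrec.id (Primrec.const 1)
      (Primrec.nat_double.comp Primrec.snd).to₂
  exact h.of_eq (fun n => by
    induction n with
    | zero => rfl
    | succ n ih => rw [Function.iterate_succ_apply', ih, pow_succ]; ring)

/-! ### The encoding of ℚ -/

def Bc (q : ℚ) : ℕ := Nat.pair (@Encodable.encode ℤ _ q.num) q.den

lemma base_eq (q : ℚ) : @Encodable.encode ℚ Rat.instEncodable q = Bc q := rfl

lemma icode_ofNat (n : ℕ) : @Encodable.encode ℤ _ (Int.ofNat n) = 2*n := rfl
lemma icode_negSucc (n : ℕ) : @Encodable.encode ℤ _ (Int.negSucc n) = 2*n+1 := rfl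

def memB (m : ℕ) : Bool :=
  decide (0 < (Nat.unpair m).2) && (Nat.gcd (((Nat.unpair m).1+1)/2) (Nat.unpair m).2 == 1)

lemma natAbs_code (z : ℤ) : (@Encodable.encode ℤ _ z + 1)/2 = z.natAbs := by
  cases z with
  | ofNat n => rw [icode_ofNat]; simp [Int.natAbs_natCast]; omega
  | negSucc n => rw [icode_negSucc]; simp; omega

lemma encode_ofNat_int (a : ℕ) : @Encodable.encode ℤ _ (Denumerable.ofNat ℤ a) = a :=
  Denumerable.encode_ofNat _

lemma mem_range_iff (m : ℕ) :
    m ∈ Set.range (@Encodable.encode ℚ Rat.instEncodable) ↔ memB m = true := by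
  constructor
  · rintro ⟨q, rfl⟩
    rw [base_eq]
    unfold memB Bc
    simp only [Nat.unpair_pair, natAbs_code]
    simp [q.pos, q.reduced]
  · intro h
    unfold memB at h
    simp only [Bool.and_eq_true, decide_eq_true_eq, beq_iff_eq] at h
    refine ⟨⟨Denumerable.ofNat ℤ (Nat.unpair m).1, (Nat.unpair m).2, by omega, ?_⟩, ?_⟩
    · rw [Nat.Coprime, ← natAbs_code, encode_ofNat_int]; exact h.2
    · rw [base_eq]
      unfold Bc
      simp only [encode_ofNat_int]
      exact Nat.pair_unpair m

lemma primrec_memB : Primrec memB := by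
  have u1 : Primrec (fun m : ℕ => (Nat.unpair m).1) := Primrec.fst.comp Primrec.unpair
  have u2 : Primrec (fun m : ℕ => (Nat.unpair m).2) := Primrec.snd.comp Primrec.unpair
  have b1 : Primrec (fun m : ℕ => decide (0 < (Nat.unpair m).2)) :=
    (PrimrecRel.comp Primrec.nat_lt (Primrec.const 0) u2).decide
  have bg : Primrec (fun m : ℕ => Nat.gcd (((Nat.unpair m).1+1)/2) (Nat.unpair m).2) :=
    primrec_gcd.comp (Primrec.nat_div.comp (Primrec.succ.comp u1) (Primrec.const 2)) u2
  have b2 : Primrec (fun m : ℕ => (Nat.gcd (((Nat.unpair m).1+1)/2) (Nat.unpair m).2 == 1)) :=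
    Primrec.beq.comp bg (Primrec.const 1)
  exact Primrec.and.comp b1 b2

lemma countP_foldl (p : ℕ → Bool) : ∀ (l : List ℕ) (n : ℕ),
    l.foldl (fun acc b => acc + (bif p b then 1 else 0)) n = n + l.countP p := by
  intro l; induction l with
  | nil => simp
  | cons a l ih => intro n; simp [List.countP_cons, ih]; cases p a <;> simp <;> omega

lemma primrec_countP : Primrec (fun l : List ℕ => l.countP memB) := by
  have h : Primrec (fun l : List ℕ => l.foldl (fun acc b => acc + (bif memB b then 1 else 0)) 0) := by
    refine Primrec.list_foldl (h := fun (_ : List ℕ) (p : ℕ × ℕ) => p.1 + (bif memB p.2 then 1 else 0)) Primrec.id (Primrec.const 0) ?_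
    refine Primrec₂.mk (α := List ℕ) (β := ℕ × ℕ) ?_
    refine Primrec.nat_add.comp (Primrec.fst.comp Primrec.snd) ?_
    exact (Primrec.cond (primrec_memB.comp (Primrec.snd.comp Primrec.snd))
      (Primrec.const 1) (Primrec.const 0))
  exact h.of_eq (fun l => by rw [countP_foldl]; omega)

lemma encQ_raw (q : ℚ) : @Encodable.encode ℚ Primcodable.toEncodable q =
    (List.range (Bc q)).countP (fun m => @decide _ (Encodable.decidableRangeEncode ℚ m)) := rfl

lemma encQ (q : ℚ) : @Encodable.encode ℚ Primcodable.toEncodable q =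
    (List.range (Bc q)).countP memB := by
  rw [encQ_raw]
  apply List.countP_congr
  intro m _
  by_cases hP : m ∈ Set.range (@Encodable.encode ℚ Rat.instEncodable)
  · simp [hP, (mem_range_iff m).mp hP]
  · have h2 : memB m = false := by
      rw [← Bool.not_eq_true, ← mem_range_iff]; exact hP
    simp [hP, h2]

/-! ### The dyadic query rationals -/

def qr (n k : ℕ) : ℚ :=
  ⟨((2*k+1 : ℕ) : ℤ), 2^(n+1), pow_ne_zero _ two_ne_zero, by
    simp only [Int.natAbs_natCast]
    exact (Nat.Coprime.symm ((Nat.Prime.coprime_iff_not_dvd Nat.prime_two).mpr (by omega))).pow_right _⟩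

lemma qr_num (n k : ℕ) : (qr n k).num = ((2*k+1 : ℕ) : ℤ) := rfl
lemma qr_den (n k : ℕ) : (qr n k).den = 2^(n+1) := rfl

lemma Bc_qr (n k : ℕ) : Bc (qr n k) = Nat.pair (2*(2*k+1)) (2^(n+1)) := by
  unfold Bc; rw [qr_num, qr_den, show ((2*k+1 : ℕ) : ℤ) = Int.ofNat (2*k+1) from rfl, icode_ofNat]

lemma primrec_qr : Primrec₂ qr := by
  rw [show qr = fun n k => qr n k from rfl]
  have henc : Primrec (fun p : ℕ × ℕ => @Encodable.encode ℚ Primcodable.toEncodable (qr p.1 p.2)) := by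
    have hb : Primrec (fun p : ℕ × ℕ => Bc (qr p.1 p.2)) := by
      have : Primrec (fun p : ℕ × ℕ => Nat.pair (2*(2*p.2+1)) (2^(p.1+1))) := by
        refine Primrec₂.natPair.comp ?_ ?_
        · exact Primrec.nat_double.comp (Primrec.nat_double_succ.comp Primrec.snd)
        · exact primrec_pow2.comp (Primrec.succ.comp Primrec.fst)
      exact this.of_eq (fun p => (Bc_qr p.1 p.2).symm)
    exact (primrec_countP.comp (Primrec.list_range.comp hb)).of_eq
      (fun p => (encQ _).symm)
  exact Primrec.encode_iff.mp henc

lemma qr_cast (n k : ℕ) : ((qr n k : ℚ) : ℝ) = (2*k+1) / 2^(n+1) := by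
  rw [Rat.cast_def, qr_num, qr_den]
  push_cast
  ring

/-! ### Analysis -/

variable (A : Set ℕ)

noncomputable def g : ℕ → ℝ := fun a => Set.indicator A (fun a => (2 : ℝ) ^ (-((a : ℤ) + 1))) a

lemma pow_eq (a : ℕ) : (2 : ℝ) ^ (-((a : ℤ) + 1)) = ((2:ℝ)⁻¹)^(a+1) := by
  have h1 : -((a:ℤ)+1) = -(((a+1 : ℕ)) : ℤ) := by push_cast; ring
  rw [h1, zpow_neg, zpow_natCast, inv_pow]

lemma g_mem {a : ℕ} (h : a ∈ A) : g A a = ((2:ℝ)⁻¹)^(a+1) := by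
  rw [g, Set.indicator_of_mem h, pow_eq]

lemma g_not_mem {a : ℕ} (h : a ∉ A) : g A a = 0 := Set.indicator_of_notMem h _

lemma g_nonneg (a : ℕ) : 0 ≤ g A a := by
  by_cases h : a ∈ A
  · rw [g_mem A h]; positivity
  · rw [g_not_mem A h]

lemma g_le (a : ℕ) : g A a ≤ ((2:ℝ)⁻¹)^(a+1) := by
  by_cases h : a ∈ A
  · rw [g_mem A h]
  · rw [g_not_mem A h]; positivity

lemma aux_summable : Summable (fun a : ℕ => ((2:ℝ)⁻¹)^(a+1)) := by
  apply Summable.comp_injective (f := fun a : ℕ => ((2:ℝ)⁻¹)^a) ?_ (add_left_injective 1)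
  exact summable_geometric_of_lt_one (by norm_num) (by norm_num)

lemma hsum : Summable (g A) :=
  Summable.of_nonneg_of_le (g_nonneg A) (g_le A) (aux_summable)

noncomputable def S (N : ℕ) : ℝ := ∑ i ∈ Finset.range N, g A i

lemma tail_eq (N : ℕ) : S A N + ∑' i, g A (i + N) = ∑' i, g A i :=
  Summable.sum_add_tsum_nat_add N (hsum A)

set_option maxHeartbeats 1000000 in
lemma lt1 {N : ℕ} (h : ∃ m, N ≤ m ∧ m ∈ A) : S A N < ∑' i, g A i := by
  obtain ⟨m, hm, hmA⟩ := h
  rw [← tail_eq A N]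
  have h1 : g A m ≤ ∑' i, g A (i + N) := by
    have hsum2 : Summable (fun i => g A (i + N)) := (summable_nat_add_iff N).mpr (hsum A)
    have := Summable.le_tsum hsum2 (m - N) (fun j _ => g_nonneg A _)
    rwa [Nat.sub_add_cancel hm] at this
  have h2 : (0:ℝ) < g A m := by rw [g_mem A hmA]; positivity
  linarith

lemma geom_tail (N : ℕ) : ∑' i : ℕ, ((2:ℝ)⁻¹)^(i+N+1) = ((2:ℝ)^N)⁻¹ := by
  have h1 : ∀ i : ℕ, ((2:ℝ)⁻¹)^(i+N+1) = ((2:ℝ)⁻¹)^i * ((2:ℝ)⁻¹)^(N+1) := by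
    intro i; rw [← pow_add, add_assoc]
  simp_rw [h1]
  rw [tsum_mul_right, tsum_geometric_of_lt_one (by norm_num) (by norm_num)]
  rw [pow_succ, inv_pow]
  norm_num
  ring

set_option maxHeartbeats 1000000 in
lemma lt2 {N : ℕ} (h : ∃ m, N ≤ m ∧ m ∉ A) : ∑' i, g A i < S A N + ((2:ℝ)^N)⁻¹ := by
  obtain ⟨m, hm, hmA⟩ := h
  rw [← tail_eq A N, ← geom_tail N]
  have hlt : ∑' i, g A (i + N) < ∑' i : ℕ, ((2:ℝ)⁻¹)^(i+N+1) := by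
    apply Summable.tsum_lt_tsum (i := m - N) (fun i => g_le A _)
    · rw [Nat.sub_add_cancel hm, g_not_mem A hmA]; positivity
    · exact (summable_nat_add_iff N).mpr (hsum A)
    · apply Summable.comp_injective (f := fun a : ℕ => ((2:ℝ)⁻¹)^a) ?_
        (fun i j hij => by simpa using hij : Function.Injective (fun i : ℕ => i + N + 1))
      exact summable_geometric_of_lt_one (by norm_num) (by norm_num)
  linarith

lemma S_succ_mem {n : ℕ} (h : n ∈ A) : S A (n+1) = S A n + ((2:ℝ)⁻¹)^(n+1) := by
  rw [S, Finset.sum_range_succ, g_mem A h]; rfl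

lemma S_succ_not_mem {n : ℕ} (h : n ∉ A) : S A (n+1) = S A n := by
  rw [S, Finset.sum_range_succ, g_not_mem A h, add_zero]; rfl

/-! ### Eventually constant predicates are computable -/

open Classical in
lemma ev_const {p : ℕ → Prop} (c : Bool) (N : ℕ) (h : ∀ n, N ≤ n → (p n ↔ c = true)) :
    ComputablePred p := by
  classical
  apply ComputablePred.computable_iff.mpr
  refine ⟨fun n => ((List.range N).map (fun i => decide (p i))).getD n c, ?_, ?_⟩
  · exact (Primrec.list_getD c).comp
      (Primrec.const ((List.range N).map (fun i => decide (p i)))) Primrec.id |>.to_comp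
  · funext n
    by_cases hn : n < N
    · have : ((List.range N).map (fun i => decide (p i))).getD n c = decide (p n) := by
        rw [List.getD_eq_getElem?_getD]
        simp [List.getElem?_map, List.getElem?_range hn]
      simp only [this]
      simp
    · have : ((List.range N).map (fun i => decide (p i))).getD n c = c := by
        apply List.getD_eq_default
        simpa using by omega
      simp only [this]
      exact propext (h n (by omega))

end S12

theorem stmt12 (A : Set ℕ) (x : ℝ)
    (hx : x = ∑' a : ℕ, Set.indicator A (fun a => (2 : ℝ) ^ (-((a : ℤ) + 1))) a)
    (hcut : ComputablePred fun q : ℚ => (q : ℝ) < x) :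
    ComputablePred fun n : ℕ => n ∈ A := by
  classical
  by_cases hcof : ∃ N : ℕ, ∀ n, N ≤ n → n ∈ A
  · obtain ⟨N, hN⟩ := hcof
    exact S12.ev_const true N (fun n hn => by simpa using hN n hn)
  by_cases hfin : ∃ N : ℕ, ∀ n, N ≤ n → n ∉ A
  · obtain ⟨N, hN⟩ := hfin
    exact S12.ev_const false N (fun n hn => by simpa using hN n hn)
  push_neg at hcof hfin
  -- hcof : ∀ N, ∃ n, N ≤ n ∧ n ∉ A ; hfin : ∀ N, ∃ n, N ≤ n ∧ n ∈ A
  have hx' : x = ∑' i, S12.g A i := hx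
  obtain ⟨f, hfc, hfp⟩ := ComputablePred.computable_iff.mp hcut
  have hq : ∀ q : ℚ, ((q:ℝ) < x) ↔ (f q = true) := by
    intro q
    exact iff_of_eq (congrFun hfp q)
  obtain ⟨K, hK0, hKs, hKc⟩ : ∃ K : ℕ → ℕ, K 0 = 0 ∧
      (∀ n, K (n+1) = 2*K n + (bif f (S12.qr n (K n)) then 1 else 0)) ∧ Computable K := by
    refine ⟨fun n => Nat.rec 0 (fun m k => 2*k + (bif f (S12.qr m k) then 1 else 0)) n,
      rfl, fun n => rfl, ?_⟩
    have c1 : Computable (fun pr : ℕ × (ℕ × ℕ) => S12.qr pr.2.1 pr.2.2) :=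
      S12.primrec_qr.to_comp.comp (Computable.fst.comp Computable.snd)
        (Computable.snd.comp Computable.snd)
    have c2 : Computable (fun pr : ℕ × (ℕ × ℕ) => f (S12.qr pr.2.1 pr.2.2)) := hfc.comp c1
    have c3 : Computable (fun pr : ℕ × (ℕ × ℕ) =>
        (bif f (S12.qr pr.2.1 pr.2.2) then 1 else 0 : ℕ)) :=
      Computable.cond c2 (Computable.const 1) (Computable.const 0)
    have c4 : Computable (fun pr : ℕ × (ℕ × ℕ) => 2 * pr.2.2) :=
      Primrec.nat_double.to_comp.comp (Computable.snd.comp Computable.snd)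
    have c5 : Computable (fun pr : ℕ × (ℕ × ℕ) =>
        2*pr.2.2 + (bif f (S12.qr pr.2.1 pr.2.2) then 1 else 0)) :=
      Primrec.nat_add.to_comp.comp c4 c3
    exact (Computable.nat_rec Computable.id (Computable.const 0) c5.to₂).of_eq fun n => rfl
  have hpow : ∀ n : ℕ, ((2:ℝ)⁻¹)^n * ((2:ℝ)^n) = 1 := by
    intro n; rw [inv_pow, inv_mul_cancel₀ (by positivity)]
  have hcast : ∀ n, (K n : ℝ) = 2^n * S12.S A n →
      ((S12.qr n (K n) : ℚ) : ℝ) = S12.S A n + ((2:ℝ)⁻¹)^(n+1) := by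
    intro n hK
    rw [S12.qr_cast, hK, div_eq_iff (show ((2:ℝ)^(n+1)) ≠ 0 by positivity)]
    linear_combination -hpow n
  have step : ∀ n, (K n : ℝ) = 2^n * S12.S A n →
      ((f (S12.qr n (K n)) = true ↔ n ∈ A) ∧ (K (n+1) : ℝ) = 2^(n+1) * S12.S A (n+1)) := by
    intro n hK
    by_cases hn : n ∈ A
    · have hS1 := S12.S_succ_mem A hn
      have hlt : S12.S A (n+1) < x := by rw [hx']; exact S12.lt1 A (hfin (n+1))
      have hqlt : ((S12.qr n (K n) : ℚ) : ℝ) < x := by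
        rw [hcast n hK, ← hS1]; exact hlt
      have hf1 : f (S12.qr n (K n)) = true := (hq _).mp hqlt
      refine ⟨by simp [hf1, hn], ?_⟩
      rw [hKs n, hf1]
      simp only [cond_true]
      push_cast
      rw [hK, hS1]
      linear_combination -hpow n
    · have hS1 := S12.S_succ_not_mem A hn
      have hlt : x < S12.S A (n+1) + ((2:ℝ)^(n+1))⁻¹ := by
        rw [hx']; exact S12.lt2 A (hcof (n+1))
      have hqge : ¬ (((S12.qr n (K n) : ℚ) : ℝ) < x) := by
        rw [hcast n hK]
        rw [hS1, ← inv_pow] at hlt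
        exact not_lt.mpr (le_of_lt hlt)
      have hf0 : f (S12.qr n (K n)) = false := by
        rcases h' : f (S12.qr n (K n)) with _ | _
        · rfl
        · exact absurd ((hq _).mpr h') hqge
      refine ⟨by simp [hf0, hn], ?_⟩
      rw [hKs n, hf0]
      simp only [cond_false]
      push_cast
      rw [hK, hS1, pow_succ]
      ring
  have inv : ∀ n, (K n : ℝ) = 2^n * S12.S A n := by
    intro n
    induction n with
    | zero => simp [hK0, S12.S]
    | succ n ih => exact (step n ih).2
  apply ComputablePred.computable_iff.mpr
  refine ⟨fun n => f (S12.qr n (K n)), ?_, ?_⟩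
  · exact hfc.comp (S12.primrec_qr.to_comp.comp Computable.id hKc)
  · funext n
    exact propext ((step n (inv n)).1).symm
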